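/- Let N ≥ 1, let S ⊆ ℝ^N be compact, let h ∈ B_S, and let D ⊆ ℝ^N be a measurable set. Then the operator T_h^{(D)} is firmly nonexpansive on B_S: for all f, g ∈ B_S, ‖T_h^{(D)} f − T_h^{(D)} g‖² ≤ ⟨f − g, T_h^{(D)} f − T_h^{(D)} g⟩. -/

import Mathlib

open MeasureTheory FourierTransform Filter

noncomputable section

/-- The Hilbert space `L²(ℝᴺ; ℂ)` of square-integrable functions on `ℝᴺ`. -/
abbrev L2Space (N : ℕ) : Type :=
  Lp ℂ 2 (volume : Measure (EuclideanSpace ℝ (Fin N)))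

/-- `f ∈ L²(ℝᴺ)` is bandlimited to `S`: its Fourier transform vanishes (a.e.) outside `S`;
equivalently, `f` agrees a.e. with the inverse Fourier transform of an integrable function `F`
vanishing outside `S`. -/
def IsBandlimited {N : ℕ} (S : Set (EuclideanSpace ℝ (Fin N))) (f : L2Space N) : Prop :=
  ∃ F : EuclideanSpace ℝ (Fin N) → ℂ,
    Integrable F ∧ (∀ k, k ∉ S → F k = 0) ∧
      (f : EuclideanSpace ℝ (Fin N) → ℂ) =ᵐ[volume] 𝓕⁻ F

/-- Multiplication of `f ∈ L²` by the indicator function `χ_D`, as an element of `L²`. -/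
def chiMul {N : ℕ} {D : Set (EuclideanSpace ℝ (Fin N))} (hD : MeasurableSet D)
    (f : L2Space N) : L2Space N :=
  ((Lp.memLp f).indicator hD).toLp (D.indicator f)

/-- The orthogonal projection of `L²(ℝᴺ)` onto a closed subspace `K`. -/
def projOf {N : ℕ} (K : Submodule ℂ (L2Space N)) (hK : IsClosed (K : Set (L2Space N))) :
    L2Space N → L2Space N :=
  haveI : CompleteSpace K := hK.completeSpace_coe
  fun f => (K.orthogonalProjectionOnto f : L2Space N)

/-- The operator `T_h^{(D)} f = P_S (f + χ_D (h − f))` (single region). -/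
def Tsingle {N : ℕ} (K : Submodule ℂ (L2Space N)) (hK : IsClosed (K : Set (L2Space N)))
    {D : Set (EuclideanSpace ℝ (Fin N))} (hD : MeasurableSet D)
    (h f : L2Space N) : L2Space N :=
  projOf K hK (f + chiMul hD (h - f))

lemma chiMul_coeFn {N : ℕ} {D : Set (EuclideanSpace ℝ (Fin N))} (hD : MeasurableSet D)
    (f : L2Space N) :
    (chiMul hD f : EuclideanSpace ℝ (Fin N) → ℂ) =ᵐ[volume] D.indicator f :=
  MemLp.coeFn_toLp _

lemma chiMul_sub {N : ℕ} {D : Set (EuclideanSpace ℝ (Fin N))} (hD : MeasurableSet D)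
    (a b : L2Space N) : chiMul hD (a - b) = chiMul hD a - chiMul hD b := by
  apply Lp.ext
  filter_upwards [chiMul_coeFn hD (a - b), chiMul_coeFn hD a, chiMul_coeFn hD b,
    Lp.coeFn_sub (chiMul hD a) (chiMul hD b),
    (Lp.coeFn_sub a b).indicator (s := D)] with x h1 h2 h3 h4 h5
  rw [h1, h4, Pi.sub_apply, h2, h3, h5]
  by_cases hx : x ∈ D <;> simp [Set.indicator_of_mem, Set.indicator_of_notMem, hx]

lemma inner_chiMul_sub {N : ℕ} {D : Set (EuclideanSpace ℝ (Fin N))} (hD : MeasurableSet D)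
    (u : L2Space N) : (inner ℂ (chiMul hD u) (u - chiMul hD u) : ℂ) = 0 := by
  rw [MeasureTheory.L2.inner_def]
  rw [show (0 : ℂ) = ∫ _ : EuclideanSpace ℝ (Fin N), (0 : ℂ) ∂volume by simp]
  apply integral_congr_ae
  filter_upwards [chiMul_coeFn hD u, Lp.coeFn_sub u (chiMul hD u)] with x h1 h2
  rw [h2, Pi.sub_apply, h1]
  by_cases hx : x ∈ D
  · simp [Set.indicator_of_mem hx]
  · simp [Set.indicator_of_notMem hx]

/-- For `h ∈ B_S` and `D` measurable, the operator `T_h^{(D)}` is firmly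
nonexpansive on `B_S`:
`‖T_h^{(D)} f − T_h^{(D)} g‖² ≤ ⟨f − g, T_h^{(D)} f − T_h^{(D)} g⟩` for all `f, g ∈ B_S`. -/
theorem firmly_nonexpansive_single (N : ℕ) (hN : 1 ≤ N)
    (S : Set (EuclideanSpace ℝ (Fin N))) (hS : IsCompact S)
    (K : Submodule ℂ (L2Space N))
    (hKset : (K : Set (L2Space N)) = {f : L2Space N | IsBandlimited S f})
    (hK : IsClosed (K : Set (L2Space N)))
    (h : L2Space N) (hh : IsBandlimited S h)
    (D : Set (EuclideanSpace ℝ (Fin N))) (hD : MeasurableSet D) :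
    ∀ f g : L2Space N, IsBandlimited S f → IsBandlimited S g →
      ‖Tsingle K hK hD h f - Tsingle K hK hD h g‖ ^ 2 ≤
        (inner ℂ (f - g) (Tsingle K hK hD h f - Tsingle K hK hD h g) : ℂ).re := by
  haveI : CompleteSpace K := hK.completeSpace_coe
  intro f g hf hg
  have hfK : f ∈ K := by rw [← SetLike.mem_coe, hKset]; exact hf
  have hgK : g ∈ K := by rw [← SetLike.mem_coe, hKset]; exact hg
  set u := f - g with hu
  have huK : u ∈ K := sub_mem hfK hgK
  set w := u - chiMul hD u with hw
  -- The difference of the two operator values is the projection of `w`.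
  have hT : Tsingle K hK hD h f - Tsingle K hK hD h g = projOf K hK w := by
    have h1 : chiMul hD (h - f) = chiMul hD (h - g) - chiMul hD u := by
      rw [← chiMul_sub]; congr 1; rw [hu]; abel
    simp only [Tsingle, projOf]
    rw [← Submodule.coe_sub, ← map_sub]
    congr 2
    rw [h1, hw, hu]; abel
  rw [hT]
  -- Basic facts about `w` and its projection.
  have hinner_uw : (inner ℂ u w : ℂ) = (‖w‖ : ℂ) ^ 2 := by
    have : (inner ℂ u w : ℂ) = inner ℂ (chiMul hD u) w + inner ℂ w w := by
      rw [← inner_add_left]; congr 1; rw [hw]; abel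
    rw [this, hw, inner_chiMul_sub hD u, zero_add, inner_self_eq_norm_sq_to_K]
    norm_num
  have hproj_inner : (inner ℂ u (projOf K hK w) : ℂ) = inner ℂ u w := by
    have h0 : (inner ℂ (w - (K.orthogonalProjectionOnto w : L2Space N)) u : ℂ) = 0 :=
      K.starProjection_inner_eq_zero w u huK
    have h0' : (inner ℂ u (w - (K.orthogonalProjectionOnto w : L2Space N)) : ℂ) = 0 := by
      rw [← inner_conj_symm, h0, map_zero]
    have : (inner ℂ u w : ℂ) =
        inner ℂ u (projOf K hK w) + inner ℂ u (w - (K.orthogonalProjectionOnto w : L2Space N)) := by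
      rw [← inner_add_right]
      congr 1
      simp [projOf]
    rw [this, h0', add_zero]
  have hnorm : ‖projOf K hK w‖ ≤ ‖w‖ := by
    have h1 : ‖projOf K hK w‖ = ‖K.orthogonalProjectionOnto w‖ := by
      simp [projOf]
    have h2 := K.orthogonalProjectionOnto.le_opNorm w
    have h3 := K.orthogonalProjectionOnto_norm_le
    rw [h1]
    calc ‖K.orthogonalProjectionOnto w‖ ≤ ‖K.orthogonalProjectionOnto‖ * ‖w‖ := h2
      _ ≤ 1 * ‖w‖ := by
          exact mul_le_mul_of_nonneg_right h3 (norm_nonneg _)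
      _ = ‖w‖ := one_mul _
  calc ‖projOf K hK w‖ ^ 2 ≤ ‖w‖ ^ 2 := by
        exact pow_le_pow_left₀ (norm_nonneg _) hnorm 2
    _ = (inner ℂ u w : ℂ).re := by rw [hinner_uw, ← Complex.ofReal_pow, Complex.ofReal_re]
    _ = (inner ℂ u (projOf K hK w) : ℂ).re := by rw [hproj_inner]
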